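/- arXiv:1911.02159 — 5 statements merged into one kernel-verified Lean document; each statement's English description precedes it below -/
import Mathlib

section
/- Let γ > 1, a∞ > 0, ρ₀ > 0, v₀ ∈ ℝ, and for α > 0 set ρ = αρ₀ and v = v₀ - √(2ρ₀^{γ-1}(α-1)(α^{γ-1}-1)/((γ-1)a∞²(α+1))). Then with u₀(ρ,v) = -(1/2)v² - (ρ^{γ-1}-1)/((γ-1)a∞²), the Rankine–Hugoniot expression F(α,v) := (αv - v₀)(v - v₀) - (α - 1)(u₀(ρ₀,v₀) - u₀(αρ₀, v)) vanishes. -/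
/-- The explicit shock curve v = v₀ - √(2ρ₀^(γ-1)(α-1)(α^(γ-1)-1)/((γ-1)a²(α+1)))
    makes the Rankine–Hugoniot expression F(α,v) vanish. -/
theorem stmt_4 (γ a ρ₀ v₀ α : ℝ) (hγ : 1 < γ) (ha : 0 < a) (hρ₀ : 0 < ρ₀) (hα : 0 < α)
    (v : ℝ)
    (hv : v = v₀ - Real.sqrt (2 * ρ₀ ^ (γ - 1) * (α - 1) * (α ^ (γ - 1) - 1) /
        ((γ - 1) * a ^ 2 * (α + 1))))
    (u₀ : ℝ → ℝ → ℝ)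
    (hu₀ : ∀ ρ w, u₀ ρ w = -(1 / 2) * w ^ 2 - (ρ ^ (γ - 1) - 1) / ((γ - 1) * a ^ 2)) :
    (α * v - v₀) * (v - v₀) - (α - 1) * (u₀ ρ₀ v₀ - u₀ (α * ρ₀) v) = 0 := by
  have hγ1 : (0:ℝ) < γ - 1 := by linarith
  have hP : (0:ℝ) < ρ₀ ^ (γ - 1) := Real.rpow_pos_of_pos hρ₀ _
  have hnum : 0 ≤ (α - 1) * (α ^ (γ - 1) - 1) := by
    rcases le_or_gt 1 α with h1 | h1
    · have : (1:ℝ) ≤ α ^ (γ - 1) := Real.one_le_rpow h1 (le_of_lt hγ1)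
      nlinarith
    · have : α ^ (γ - 1) ≤ 1 := Real.rpow_le_one (le_of_lt hα) (le_of_lt h1) (le_of_lt hγ1)
      nlinarith
  have harg : 0 ≤ 2 * ρ₀ ^ (γ - 1) * (α - 1) * (α ^ (γ - 1) - 1) /
      ((γ - 1) * a ^ 2 * (α + 1)) := by
    apply div_nonneg
    · nlinarith
    · positivity
  set s := Real.sqrt (2 * ρ₀ ^ (γ - 1) * (α - 1) * (α ^ (γ - 1) - 1) /
      ((γ - 1) * a ^ 2 * (α + 1))) with hs
  have hs2 : s ^ 2 = 2 * ρ₀ ^ (γ - 1) * (α - 1) * (α ^ (γ - 1) - 1) /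
      ((γ - 1) * a ^ 2 * (α + 1)) := Real.sq_sqrt harg
  have hmul : (α * ρ₀) ^ (γ - 1) = α ^ (γ - 1) * ρ₀ ^ (γ - 1) :=
    Real.mul_rpow (le_of_lt hα) (le_of_lt hρ₀)
  rw [hv, hu₀, hu₀, hmul]
  have ha' : a ≠ 0 := ne_of_gt ha
  have hγ' : γ - 1 ≠ 0 := ne_of_gt hγ1
  have hα1 : α + 1 ≠ 0 := by positivity
  field_simp at hs2 ⊢
  nlinarith [hs2, sq_nonneg s]
end

section
/- For every γ ∈ [1,2] and every α ∈ (0,1), the quantity Δ₀(α,γ) := 2α^γ - (γ+1)α² + 2α - 3 + γ is strictly negative. Moreover ∂Δ₀/∂α = 2γα^{γ-1} - 2(γ+1)α + 2 > 0 for α ∈ (0,1) and Δ₀(1,γ) = 0. -/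
lemma aux_hasDeriv (γ : ℝ) (x : ℝ) (hx : x ≠ 0) :
    HasDerivAt (fun x : ℝ => 2 * x ^ γ - (γ + 1) * x ^ 2 + 2 * x - 3 + γ)
      (2 * γ * x ^ (γ - 1) - 2 * (γ + 1) * x + 2) x := by
  have h1 : HasDerivAt (fun x : ℝ => x ^ γ) (γ * x ^ (γ - 1)) x :=
    Real.hasDerivAt_rpow_const (Or.inl hx)
  have h2 : HasDerivAt (fun x : ℝ => x ^ 2) (2 * x) x := by
    simpa using hasDerivAt_pow 2 x
  have := ((((h1.const_mul 2).sub (h2.const_mul (γ + 1))).add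
      ((hasDerivAt_id x).const_mul 2)).sub_const 3).add_const γ
  exact this.congr_deriv (by ring)

lemma aux_deriv_pos (γ : ℝ) (hγ : γ ∈ Set.Icc (1:ℝ) 2) (x : ℝ) (hx : x ∈ Set.Ioo (0:ℝ) 1) :
    0 < 2 * γ * x ^ (γ - 1) - 2 * (γ + 1) * x + 2 := by
  obtain ⟨hγ1, hγ2⟩ := hγ
  obtain ⟨hx0, hx1⟩ := hx
  have key : x ≤ x ^ (γ - 1) := by
    have := Real.rpow_le_rpow_of_exponent_ge hx0 hx1.le (by linarith : γ - 1 ≤ 1)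
    simpa using this
  nlinarith [Real.rpow_nonneg hx0.le (γ - 1)]

/-- Δ₀(α,γ) = 2α^γ - (γ+1)α² + 2α - 3 + γ is negative on (0,1), its derivative is
    positive there, and Δ₀(1,γ) = 0. -/
theorem stmt_7 (γ : ℝ) (hγ : γ ∈ Set.Icc (1:ℝ) 2) (α : ℝ) (hα : α ∈ Set.Ioo (0:ℝ) 1) :
    (2 * α ^ γ - (γ + 1) * α ^ 2 + 2 * α - 3 + γ < 0) ∧
    HasDerivAt (fun x : ℝ => 2 * x ^ γ - (γ + 1) * x ^ 2 + 2 * x - 3 + γ)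
      (2 * γ * α ^ (γ - 1) - 2 * (γ + 1) * α + 2) α ∧
    (0 < 2 * γ * α ^ (γ - 1) - 2 * (γ + 1) * α + 2) ∧
    (2 * (1:ℝ) ^ γ - (γ + 1) * (1:ℝ) ^ 2 + 2 * 1 - 3 + γ = 0) := by
  obtain ⟨hα0, hα1⟩ := hα
  set f : ℝ → ℝ := fun x => 2 * x ^ γ - (γ + 1) * x ^ 2 + 2 * x - 3 + γ with hf
  have hmono : StrictMonoOn f (Set.Icc α 1) := by
    apply StrictMonoOn.mono (s := Set.Icc (α/2) 1)
    · apply strictMonoOn_of_deriv_pos (convex_Icc _ _)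
      · apply ContinuousOn.congr (f := f)
        · intro x hx
          exact (aux_hasDeriv γ x (by simp at hx; nlinarith [hx.1])).continuousAt.continuousWithinAt
        · intro x hx; rfl
      · intro x hx
        rw [interior_Icc] at hx
        rw [(aux_hasDeriv γ x (by nlinarith [hx.1])).deriv]
        rcases lt_or_ge x 1 with h | h
        · exact aux_deriv_pos γ hγ x ⟨by nlinarith [hx.1], h⟩
        · linarith [hx.2]
    · exact Set.Icc_subset_Icc (by linarith) le_rfl
  have hend : f 1 = 0 := by
    simp only [hf, Real.one_rpow, one_pow]; ring
  have hneg : f α < 0 := by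
    have := hmono (Set.left_mem_Icc.mpr hα1.le) (Set.right_mem_Icc.mpr hα1.le) hα1
    linarith [this, hend.ge]
  refine ⟨hneg, aux_hasDeriv γ α hα0.ne', aux_deriv_pos γ hγ α ⟨hα0, hα1⟩, ?_⟩
  simp [Real.one_rpow]; ring
end

section
/- Let γ ∈ (1,2] and α ∈ (0,1). Define J(α,γ) = 2[(γ+1)α² - 2α + 3 - γ]·((1-α^{γ-1})/(γ-1))² - 4(1-α²)α^{γ-1}·((1-α^{γ-1})/(γ-1)) + (1-α²)²α^{γ-2}. Then J(α,γ) > 0. -/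
/-- Positivity of J(α,γ) for γ ∈ (1,2], α ∈ (0,1). -/
theorem stmt_8 (γ α : ℝ) (hγ : γ ∈ Set.Ioc (1:ℝ) 2) (hα : α ∈ Set.Ioo (0:ℝ) 1) :
    0 < 2 * ((γ + 1) * α ^ 2 - 2 * α + 3 - γ) * ((1 - α ^ (γ - 1)) / (γ - 1)) ^ 2
      - 4 * (1 - α ^ 2) * α ^ (γ - 1) * ((1 - α ^ (γ - 1)) / (γ - 1))
      + (1 - α ^ 2) ^ 2 * α ^ (γ - 2) := by
  obtain ⟨hγ1, hγ2⟩ := hγ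
  obtain ⟨hα0, hα1⟩ := hα
  set t : ℝ := α ^ (γ - 1) with ht
  have ht0 : 0 < t := Real.rpow_pos_of_pos hα0 _
  -- Bernoulli: t = (1+(α-1))^(γ-1) ≤ 1 + (γ-1)(α-1)
  have hbern : t ≤ 1 + (γ - 1) * (α - 1) := by
    have := rpow_one_add_le_one_add_mul_self (s := α - 1) (by linarith) (p := γ - 1)
      (by linarith) (by linarith)
    simpa using this
  -- α^(γ-2) = t / α
  have hsplit : α ^ (γ - 2) = t / α := by
    rw [ht, show γ - 2 = (γ - 1) - 1 by ring, Real.rpow_sub hα0, Real.rpow_one]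
  have hApos : 0 < (γ + 1) * α ^ 2 - 2 * α + 3 - γ := by
    nlinarith [sq_nonneg (α - 1), sq_nonneg α]
  -- key discriminant inequality
  have hdisc : 4 * t * α < 2 * ((γ + 1) * α ^ 2 - 2 * α + 3 - γ) := by
    nlinarith [sq_nonneg (α - 1), mul_pos hα0 (sub_pos.mpr hα1)]
  rw [hsplit]
  have hq : 0 < 1 - α ^ 2 := by nlinarith
  have hu : 0 < t / α := div_pos ht0 hα0
  set X : ℝ := (1 - t) / (γ - 1) with hX
  set A : ℝ := 2 * ((γ + 1) * α ^ 2 - 2 * α + 3 - γ) with hAdef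
  have hA0 : 0 < A := by rw [hAdef]; linarith
  have hαne : α ≠ 0 := ne_of_gt hα0
  have hkey : A * (A * X ^ 2 - 4 * (1 - α ^ 2) * t * X + (1 - α ^ 2) ^ 2 * (t / α))
      = (A * X - 2 * (1 - α ^ 2) * t) ^ 2
        + (1 - α ^ 2) ^ 2 * ((t / α) * (A - 4 * t * α)) := by
    field_simp
    ring
  have hpos : 0 < A * (A * X ^ 2 - 4 * (1 - α ^ 2) * t * X + (1 - α ^ 2) ^ 2 * (t / α)) := by
    rw [hkey]
    have h2 := mul_pos (pow_pos hq 2) (mul_pos hu (by linarith : 0 < A - 4 * t * α))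
    nlinarith [sq_nonneg (A * X - 2 * (1 - α ^ 2) * t)]
  exact (mul_pos_iff_of_pos_left hA0).mp hpos
end

section
/- Let γ ∈ (1,2] and α ∈ (0,1). Set A(α) = 2(1-α^{γ-1}) + (γ-1)(1-α²)α^{γ-2} and B(α) = √(2(γ-1)(1-α)(1-α^{γ-1})(1+α)³α^{γ-3}), and define Ψ₁(α) = -(A(α) - B(α))/(A(α) + B(α)). Then 0 < Ψ₁(α) < 1. -/
set_option maxHeartbeats 800000


/-- The slope Ψ₁ = -(A-B)/(A+B) of the 1-shock curve lies in (0,1). -/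
theorem stmt_9 (γ α : ℝ) (hγ : γ ∈ Set.Ioc (1:ℝ) 2) (hα : α ∈ Set.Ioo (0:ℝ) 1)
    (A B : ℝ)
    (hA : A = 2 * (1 - α ^ (γ - 1)) + (γ - 1) * (1 - α ^ 2) * α ^ (γ - 2))
    (hB : B = Real.sqrt (2 * (γ - 1) * (1 - α) * (1 - α ^ (γ - 1)) * (1 + α) ^ 3 *
        α ^ (γ - 3))) :
    0 < -((A - B) / (A + B)) ∧ -((A - B) / (A + B)) < 1 := by
  obtain ⟨hγ1, hγ2⟩ := hγ
  obtain ⟨hα0, hα1⟩ := hα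
  set p : ℝ := γ - 1 with hpdef
  set t : ℝ := α ^ (γ - 2) with htdef
  clear_value p t
  have hp0 : 0 < p := by rw [hpdef]; linarith
  have hp1 : p ≤ 1 := by rw [hpdef]; linarith
  have ht0 : 0 < t := htdef ▸ Real.rpow_pos_of_pos hα0 _
  have h1 : α ^ (γ - 1) = t * α := by
    rw [show γ - 1 = (γ - 2) + 1 by ring, Real.rpow_add hα0, Real.rpow_one, ← htdef]
  have h3 : α ^ (γ - 3) = t / α := by
    rw [show γ - 3 = (γ - 2) - 1 by ring, Real.rpow_sub hα0, Real.rpow_one, ← htdef]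
  have hα2 : (0:ℝ) < 1 - α ^ 2 := by nlinarith
  have hs1 : (-1:ℝ) ≤ α ^ 2 - 1 := by nlinarith
  have hs2 : α ^ 2 - 1 ≠ 0 := by nlinarith
  -- Bernoulli 1 : α^p = (α²)^(p/2) < 1 + (p/2)(α²-1)
  have hber1 : t * α < 1 + p / 2 * (α ^ 2 - 1) := by
    have h := rpow_one_add_lt_one_add_mul_self hs1 hs2 (by linarith : (0:ℝ) < p / 2)
      (by linarith : p / 2 < 1)
    rw [show (1:ℝ) + (α ^ 2 - 1) = α ^ 2 by ring] at h
    have he : (α ^ 2 : ℝ) ^ (p / 2) = α ^ p := by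
      rw [← Real.rpow_natCast_mul hα0.le 2 (p / 2)]
      norm_num [mul_div_cancel₀]
    rw [he] at h
    rwa [show α ^ p = t * α by rw [hpdef, h1]] at h
  -- Bernoulli 2 : α^(2-p) = (α²)^(1-p/2) < 1 + (1-p/2)(α²-1)
  have hber2 : α < t * (1 + (1 - p / 2) * (α ^ 2 - 1)) := by
    have h := rpow_one_add_lt_one_add_mul_self hs1 hs2
      (by linarith : (0:ℝ) < 1 - p / 2) (by linarith : 1 - p / 2 < 1)
    rw [show (1:ℝ) + (α ^ 2 - 1) = α ^ 2 by ring] at h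
    have he : (α ^ 2 : ℝ) ^ (1 - p / 2) = α ^ (2 - p) := by
      rw [← Real.rpow_natCast_mul hα0.le 2 (1 - p / 2)]
      push_cast
      ring_nf
    rw [he] at h
    have ht2 : α ^ (2 - p) = α / t := by
      rw [show (2:ℝ) - p = 1 - (γ - 2) by rw [hpdef]; ring,
        Real.rpow_sub hα0, Real.rpow_one, ← htdef]
    rw [ht2, div_lt_iff₀ ht0] at h
    linarith [h]
  have htα : t * α < 1 := by nlinarith
  have hu : (0:ℝ) < 1 - t * α := by linarith
  -- A in terms of t, α
  have hA' : A = 2 * (1 - t * α) + p * (1 - α ^ 2) * t := by rw [hA, hpdef, h1]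
  have hApos : 0 < A := by
    rw [hA']; positivity
  -- the expression under the square root
  have hE : B = Real.sqrt (2 * p * (1 - α) * (1 - t * α) * (1 + α) ^ 3 * (t / α)) := by
    rw [hB, hpdef, h1, h3]
  have hEpos : 0 < 2 * p * (1 - α) * (1 - t * α) * (1 + α) ^ 3 * (t / α) := by
    have : (0:ℝ) < 1 - α := by linarith
    positivity
  have hBpos : 0 < B := by rw [hE]; exact Real.sqrt_pos.mpr hEpos
  have hBsq : B ^ 2 = 2 * p * (1 - α) * (1 - t * α) * (1 + α) ^ 3 * (t / α) := by
    rw [hE, Real.sq_sqrt hEpos.le]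
  -- key inequality : A^2 < B^2
  have hF1 : 0 < (1 - t * α) - p * (1 - α ^ 2) * (t * α) / 2 := by
    nlinarith [mul_pos (mul_pos hp0 hα2) hu]
  have hF2 : 0 < p * (1 - α ^ 2) * t / 2 - α * (1 - t * α) := by nlinarith [hber2, mul_pos ht0 hα2]
  have hkey : A ^ 2 * α < 2 * p * (1 - α) * (1 - t * α) * (1 + α) ^ 3 * t := by
    have hid : 2 * p * (1 - α) * (1 - t * α) * (1 + α) ^ 3 * t - A ^ 2 * α =
        4 * ((1 - t * α) - p * (1 - α ^ 2) * (t * α) / 2) *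
          (p * (1 - α ^ 2) * t / 2 - α * (1 - t * α)) := by
      rw [hA']; ring
    have h4 : 0 < 4 * ((1 - t * α) - p * (1 - α ^ 2) * (t * α) / 2) *
        (p * (1 - α ^ 2) * t / 2 - α * (1 - t * α)) :=
      mul_pos (mul_pos (by norm_num) hF1) hF2
    linarith [hid, h4]
  have hAB : A ^ 2 < B ^ 2 := by
    rw [hBsq]
    rw [show 2 * p * (1 - α) * (1 - t * α) * (1 + α) ^ 3 * (t / α)
        = 2 * p * (1 - α) * (1 - t * α) * (1 + α) ^ 3 * t / α by ring]
    rw [lt_div_iff₀ hα0]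
    linarith
  have hAltB : A < B := by nlinarith
  have hABsum : 0 < A + B := by linarith
  constructor
  · rw [show -((A - B) / (A + B)) = (B - A) / (A + B) by ring]
    exact div_pos (by linarith) hABsum
  · rw [show -((A - B) / (A + B)) = (B - A) / (A + B) by ring]
    rw [div_lt_one hABsum]
    linarith
end

section
/- Let γ ∈ (1,2] and α > 1. With A(α) = 2(α^{γ-1}-1) + (γ-1)(α²-1)α^{γ-2} and B(α) = √(2(γ-1)(α-1)(α^{γ-1}-1)(α+1)³ α^{γ-3}), define Ψ₂(α) = -(A(α) - B(α))/(A(α) + B(α)). Then 0 < Ψ₂(α) < 1 for all α > 1. -/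
set_option maxHeartbeats 1000000 in
/-- The slope Ψ₂ = -(A-B)/(A+B) of the 2-shock curve lies in (0,1) for α > 1. -/
theorem stmt_16 (γ α : ℝ) (hγ : γ ∈ Set.Ioc (1:ℝ) 2) (hα : 1 < α)
    (A B : ℝ)
    (hA : A = 2 * (α ^ (γ - 1) - 1) + (γ - 1) * (α ^ 2 - 1) * α ^ (γ - 2))
    (hB : B = Real.sqrt (2 * (γ - 1) * (α - 1) * (α ^ (γ - 1) - 1) * (α + 1) ^ 3 *
        α ^ (γ - 3))) :
    0 < -((A - B) / (A + B)) ∧ -((A - B) / (A + B)) < 1 := by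
  obtain ⟨hγ1, hγ2⟩ := hγ
  have hα0 : (0:ℝ) < α := lt_trans one_pos hα
  have hαne : α ≠ 0 := ne_of_gt hα0
  set t : ℝ := γ - 1 with ht
  have ht0 : 0 < t := by simp only [ht]; linarith
  have ht1 : t ≤ 1 := by simp only [ht]; linarith
  set p : ℝ := α ^ t with hp
  have hp1 : 1 < p := Real.one_lt_rpow_iff_of_pos hα0 |>.2 (Or.inl ⟨hα, ht0⟩)
  have hp0 : 0 < p := lt_trans one_pos hp1
  -- rewrite the other rpows
  have h2 : α ^ (γ - 2) = p / α := by
    have : γ - 2 = t - 1 := by ring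
    rw [this, Real.rpow_sub hα0, Real.rpow_one]
  have h3 : α ^ (γ - 3) = p / α ^ 2 := by
    have : γ - 3 = t - 2 := by ring
    rw [this, Real.rpow_sub hα0]
    norm_num [Real.rpow_two]
    rfl
  -- Bernoulli bounds on p - 1
  have hBern1 : p ≤ 1 + t * (α - 1) := by
    have := rpow_one_add_le_one_add_mul_self (s := α - 1) (by linarith) ht0.le ht1
    simpa using this
  have hBern2 : p⁻¹ ≤ 1 + t * (α⁻¹ - 1) := by
    have h := rpow_one_add_le_one_add_mul_self (s := α⁻¹ - 1)
      (by have : 0 < α⁻¹ := inv_pos.2 hα0; linarith) ht0.le ht1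
    have hinv : (1 + (α⁻¹ - 1)) ^ t = p⁻¹ := by
      have : (1:ℝ) + (α⁻¹ - 1) = α⁻¹ := by ring
      rw [this, Real.inv_rpow hα0.le]
    rwa [hinv] at h
  -- lower bound: p - 1 ≥ t * (α - 1) * p / α
  have hlow : t * (α - 1) * p / α ≤ p - 1 := by
    have h' : 1 ≤ p * (1 + t * (α⁻¹ - 1)) := by
      calc (1:ℝ) = p * p⁻¹ := (mul_inv_cancel₀ (ne_of_gt hp0)).symm
        _ ≤ p * (1 + t * (α⁻¹ - 1)) := mul_le_mul_of_nonneg_left hBern2 hp0.le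
    have h'' : α ≤ p * (α + t * (1 - α)) := by
      have hexp : p * (1 + t * (α⁻¹ - 1)) * α = p * (α + t * (1 - α)) := by
        field_simp
      calc α = 1 * α := (one_mul α).symm
        _ ≤ p * (1 + t * (α⁻¹ - 1)) * α := by
            exact mul_le_mul_of_nonneg_right h' hα0.le
        _ = p * (α + t * (1 - α)) := hexp
    rw [div_le_iff₀ hα0]
    nlinarith [h'']
  have hu1 : t * p * (α ^ 2 - 1) / (2 * α ^ 2) < p - 1 := by
    have key : t * p * (α ^ 2 - 1) / (2 * α ^ 2) < t * (α - 1) * p / α := by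
      rw [div_lt_div_iff₀ (by positivity) hα0]
      have hpos : 0 < t * p * α * (α - 1) * (α - 1) := by
        have := sub_pos.2 hα
        positivity
      nlinarith [hpos]
    linarith
  have hu2 : p - 1 < t * p * (α ^ 2 - 1) / 2 := by
    have key : t * (α - 1) < t * p * (α ^ 2 - 1) / 2 := by
      rw [lt_div_iff₀ (by norm_num : (0:ℝ) < 2)]
      have h1 : 0 < t * (α - 1) := mul_pos ht0 (sub_pos.2 hα)
      have h2' : 0 < p * (α + 1) - 2 := by nlinarith
      nlinarith [mul_pos h1 h2']
    nlinarith [key, hBern1]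
  -- A > 0
  have hApos : 0 < A := by
    rw [hA, h2]
    have hdiv : 0 < p / α := by positivity
    nlinarith [mul_pos (mul_pos ht0 (by nlinarith : (0:ℝ) < α ^ 2 - 1)) hdiv]
  -- B ^ 2
  have hSpos : 0 < 2 * t * (α - 1) * (p - 1) * (α + 1) ^ 3 * (p / α ^ 2) := by
    have h1 : 0 < α - 1 := by linarith
    have h2' : 0 < p - 1 := by linarith
    positivity
  have hBsq : B ^ 2 = 2 * t * (α - 1) * (p - 1) * (α + 1) ^ 3 * (p / α ^ 2) := by
    rw [hB, h3]
    exact Real.sq_sqrt hSpos.le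
  have hBpos : 0 < B := by
    rw [hB, h3]
    exact Real.sqrt_pos.2 hSpos
  -- B^2 > A^2
  have hkey : A ^ 2 < B ^ 2 := by
    rw [hBsq, hA, h2]
    have hD : 2 * t * (α - 1) * (p - 1) * (α + 1) ^ 3 * (p / α ^ 2)
        - (2 * (p - 1) + t * (α ^ 2 - 1) * (p / α)) ^ 2
        = 4 * (((p - 1) - t * p * (α ^ 2 - 1) / (2 * α ^ 2))
            * (t * p * (α ^ 2 - 1) / 2 - (p - 1))) := by
      field_simp
      ring
    have hprod : 0 < ((p - 1) - t * p * (α ^ 2 - 1) / (2 * α ^ 2))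
        * (t * p * (α ^ 2 - 1) / 2 - (p - 1)) :=
      mul_pos (by linarith) (by linarith)
    linarith [hD, hprod]
  have hAB : A < B := by nlinarith
  have hsum : 0 < A + B := by linarith
  have hrw : -((A - B) / (A + B)) = (B - A) / (A + B) := by ring
  rw [hrw]
  constructor
  · exact div_pos (by linarith) hsum
  · rw [div_lt_one hsum]; linarith
end
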